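/- On an r × m grid labeled with labels from a set of size k such that each label class has size n/k (n = r·m divisible by k) arranged as a valid placement, the cut size of the k-Balanced Partition induced by the label classes equals the number of neighboring pairs of cells with different labels; in particular, any placement φ of a multiset consisting of k distinct single-character probes with prescribed multiplicities summing to n, together with the unique good deposition sequence, has border length (with single-character probes) equal to the cut size of the corresponding partition of the grid graph. -/

import Mathlib

/-- Two cells of an `r × m` array are neighbors iff their Manhattan distance is `1`. -/
abbrev adj {r m : ℕ} (u v : Fin r × Fin m) : Prop :=
  Nat.dist (u.1 : ℕ) (v.1 : ℕ) + Nat.dist (u.2 : ℕ) (v.2 : ℕ) = 1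

/-- The greedy leftmost embedding of a string `s` into a supersequence `D`. -/
def emb {α : Type*} [DecidableEq α] : List α → List α → List (Option α)
  | [], _ => []
  | _ :: D, [] => none :: emb D []
  | d :: D, c :: s => if d = c then some c :: emb D s else none :: emb D (c :: s)

/-- Hamming distance between two lists (of equal length). -/
def hammingL {β : Type*} [DecidableEq β] : List β → List β → ℕ
  | x :: xs, y :: ys => (if x = y then 0 else 1) + hammingL xs ys
  | _, _ => 0

lemma hammingL_self {β : Type*} [DecidableEq β] (l : List β) : hammingL l l = 0 := by
  induction l with
  | nil => rfl
  | cons x xs ih => simp [hammingL, ih]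

lemma hammingL_comm {β : Type*} [DecidableEq β] (l l' : List β) :
    hammingL l l' = hammingL l' l := by
  induction l generalizing l' with
  | nil => cases l' <;> rfl
  | cons x xs ih =>
    cases l' with
    | nil => rfl
    | cons y ys => simp [hammingL, ih, eq_comm]

lemma hammingL_emb_nil {α : Type*} [DecidableEq α] (D : List α) (b : α) (hb : b ∈ D) :
    hammingL (emb D []) (emb D [b]) = 1 := by
  induction D with
  | nil => cases hb
  | cons d D ih =>
    by_cases h : d = b
    · simp [emb, h, hammingL, hammingL_self]
    · have hb' : b ∈ D := by
        rcases List.mem_cons.mp hb with h' | h'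
        · exact absurd h'.symm h
        · exact h'
      simp [emb, h, hammingL, ih hb']

lemma hammingL_emb_ne {α : Type*} [DecidableEq α] (D : List α) (a b : α)
    (ha : a ∈ D) (hb : b ∈ D) (hab : a ≠ b) :
    hammingL (emb D [a]) (emb D [b]) = 2 := by
  induction D with
  | nil => cases ha
  | cons d D ih =>
    by_cases h1 : d = a
    · have h2 : ¬ d = b := by rw [h1]; exact hab
      have hb' : b ∈ D := by
        rcases List.mem_cons.mp hb with h' | h'
        · exact absurd h'.symm h2
        · exact h'
      simp [emb, h1, h2, hab, hammingL, hammingL_emb_nil D b hb']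
    · by_cases h2 : d = b
      · have ha' : a ∈ D := by
          rcases List.mem_cons.mp ha with h' | h'
          · exact absurd h'.symm h1
          · exact h'
        have := hammingL_emb_nil D a ha'
        simp [emb, h1, h2, hab.symm, hammingL, hammingL_comm (emb D [a]) (emb D []), this]
      · have ha' : a ∈ D := by
          rcases List.mem_cons.mp ha with h' | h'
          · exact absurd h'.symm h1
          · exact h'
        have hb' : b ∈ D := by
          rcases List.mem_cons.mp hb with h' | h'
          · exact absurd h'.symm h2
          · exact h'
        simp [emb, h1, h2, hammingL, ih ha' hb']

/-- For a placement `φ` of single-character probes over the alphabet `Fin k` on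
an `r × m` grid, with deposition sequence `D = c_1 c_2 ... c_k`, the border
length (sum over ordered neighboring pairs of Hamming distances of embeddings)
equals `2` times the number of ordered neighboring pairs with different labels,
i.e. twice the cut size of the induced partition of the grid graph (both sides
count each unordered pair twice). -/
theorem stmt_15 (r m k : ℕ) (φ : Fin r × Fin m → Fin k) :
    ∑ p ∈ Finset.univ.filter
        (fun p : (Fin r × Fin m) × (Fin r × Fin m) => adj p.1 p.2),
        hammingL (emb (List.finRange k) [φ p.1]) (emb (List.finRange k) [φ p.2]) =
    2 * (Finset.univ.filter
        (fun p : (Fin r × Fin m) × (Fin r × Fin m) =>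
          adj p.1 p.2 ∧ φ p.1 ≠ φ p.2)).card := by
  have key : ∀ p : (Fin r × Fin m) × (Fin r × Fin m),
      hammingL (emb (List.finRange k) [φ p.1]) (emb (List.finRange k) [φ p.2]) =
      if φ p.1 ≠ φ p.2 then 2 else 0 := by
    intro p
    by_cases h : φ p.1 = φ p.2
    · simp [h, hammingL_self]
    · simp [h, hammingL_emb_ne (List.finRange k) _ _ (List.mem_finRange _)
        (List.mem_finRange _) h]
  rw [Finset.sum_congr rfl (fun p _ => key p)]
  rw [Finset.sum_filter]
  have : ∀ p : (Fin r × Fin m) × (Fin r × Fin m),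
      (if adj p.1 p.2 then (if φ p.1 ≠ φ p.2 then 2 else 0) else 0) =
      (if adj p.1 p.2 ∧ φ p.1 ≠ φ p.2 then 2 else 0) := by
    intro p
    by_cases h1 : adj p.1 p.2 <;> by_cases h2 : φ p.1 ≠ φ p.2 <;> simp [h1, h2]
  rw [Finset.sum_congr rfl (fun p _ => this p), ← Finset.sum_filter,
    Finset.sum_const, smul_eq_mul, mul_comm]
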